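/- Let 𝓗 = (H, ≼) be an f.g.u. weakly positive monoid. Then there exists a finite set A of ≼-irreducibles such that every ≼-non-unit of H can be written as a non-empty product of elements of 𝓘(𝓗) ∩ 𝓗^× A 𝓗^×. In particular, 𝓗 is factorable. -/

import Mathlib

open Pointwise

namespace FactPaper

/-- `u` is a `≼`-unit for the preorder-like relation `r` on a monoid. -/
def RUnit {M : Type*} [Monoid M] (r : M → M → Prop) (u : M) : Prop :=
  r u 1 ∧ r 1 u

/-- `u` is a `≼`-non-unit. -/
def RNonUnit {M : Type*} [Monoid M] (r : M → M → Prop) (u : M) : Prop :=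
  ¬ RUnit r u

/-- The strict part `≺` of the relation `r`. -/
def RLt {M : Type*} (r : M → M → Prop) (x y : M) : Prop :=
  r x y ∧ ¬ r y x

/-- `a` is a `≼`-irreducible. -/
def RIrred {M : Type*} [Monoid M] (r : M → M → Prop) (a : M) : Prop :=
  RNonUnit r a ∧
    ∀ y z : M, RNonUnit r y → RNonUnit r z → RLt r y a → RLt r z a → a ≠ y * z

/-- `a` is a `≼`-atom. -/
def RAtom {M : Type*} [Monoid M] (r : M → M → Prop) (a : M) : Prop :=
  RNonUnit r a ∧ ∀ y z : M, RNonUnit r y → RNonUnit r z → a ≠ y * z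

/-- `a` is a `≼`-quark. -/
def RQuark {M : Type*} [Monoid M] (r : M → M → Prop) (a : M) : Prop :=
  RNonUnit r a ∧ ¬ ∃ b : M, RNonUnit r b ∧ RLt r b a

/-- The divisibility preorder: `Dvd2 x y` iff `y ∈ M x M`. -/
def Dvd2 {M : Type*} [Monoid M] (x y : M) : Prop :=
  ∃ u v : M, y = u * x * v

/-- The restriction of a relation on `M` to a submonoid `K`. -/
def SubRel {M : Type*} [Monoid M] (r : M → M → Prop) (K : Submonoid M) (a b : K) : Prop :=
  r (a : M) (b : M)

/-- The preorder `⊑` on words induced by `r`: an injection of indices matching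
`r`-equivalent letters. -/
def WordLe {M : Type*} (r : M → M → Prop) (l m : List M) : Prop :=
  ∃ σ : Fin l.length ↪ Fin m.length,
    ∀ i : Fin l.length, r (l.get i) (m.get (σ i)) ∧ r (m.get (σ i)) (l.get i)

/-- `⊑`-equivalence of words. -/
def WordEquiv {M : Type*} (r : M → M → Prop) (l m : List M) : Prop :=
  WordLe r l m ∧ WordLe r m l

/-- `l` is a `≼`-factorization of `x`: a word of `≼`-irreducibles with product `x`. -/
def IsFac {M : Type*} [Monoid M] (r : M → M → Prop) (x : M) (l : List M) : Prop :=
  (∀ a ∈ l, RIrred r a) ∧ l.prod = x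

/-- `l` is a minimal `≼`-factorization of `x`: a `⊑`-minimal `≼`-factorization. -/
def IsMinFac {M : Type*} [Monoid M] (r : M → M → Prop) (x : M) (l : List M) : Prop :=
  IsFac r x l ∧ ∀ m : List M, IsFac r x m → WordLe r m l → WordLe r l m

/-- `l` is an atomic `≼`-factorization of `x`. -/
def IsAtomicFac {M : Type*} [Monoid M] (r : M → M → Prop) (x : M) (l : List M) : Prop :=
  (∀ a ∈ l, RAtom r a) ∧ l.prod = x

/-- `l` is a minimal atomic `≼`-factorization of `x`. -/
def IsMinAtomicFac {M : Type*} [Monoid M] (r : M → M → Prop) (x : M) (l : List M) : Prop :=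
  IsMinFac r x l ∧ ∀ a ∈ l, RAtom r a

/-- Every `≼`-non-unit is a non-empty product of `≼`-irreducibles. -/
def Factorable {M : Type*} [Monoid M] (r : M → M → Prop) : Prop :=
  ∀ x : M, RNonUnit r x →
    ∃ l : List M, l ≠ [] ∧ (∀ a ∈ l, RIrred r a) ∧ l.prod = x

/-- Every `≼`-non-unit is a non-empty product of `≼`-atoms. -/
def Atomic {M : Type*} [Monoid M] (r : M → M → Prop) : Prop :=
  ∀ x : M, RNonUnit r x →
    ∃ l : List M, l ≠ [] ∧ (∀ a ∈ l, RAtom r a) ∧ l.prod = x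

/-- The premonoid `(M, r)` is finitely generated up to units. -/
def IsFGU {M : Type*} [Monoid M] (r : M → M → Prop) : Prop :=
  ∃ A : Set M, A.Finite ∧
    Submonoid.closure
      {w : M | ∃ u a v : M, RUnit r u ∧ a ∈ A ∧ RUnit r v ∧ w = u * a * v} = ⊤

/-- The submonoid generated by the `∣_M`-divisors of `x` (ground monoid of the germ of a
premonoid at `x`). -/
def GermSub {M : Type*} [Monoid M] (x : M) : Submonoid M :=
  Submonoid.closure {y : M | Dvd2 y x}

/-- Membership in the smallest divisor-closed submonoid containing `x`. -/
inductive InDC {M : Type*} [Monoid M] (x : M) : M → Prop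
  | base : InDC x x
  | one : InDC x 1
  | mul {a b : M} : InDC x a → InDC x b → InDC x (a * b)
  | dvd {a b : M} : InDC x b → Dvd2 a b → InDC x a

/-- The smallest divisor-closed submonoid of `M` containing `x`. -/
def DCSub {M : Type*} [Monoid M] (x : M) : Submonoid M where
  carrier := {y : M | InDC x y}
  mul_mem' := fun ha hb => InDC.mul ha hb
  one_mem' := InDC.one

/-- `(M, r)` is a weakly positive monoid. -/
def WeaklyPositive {M : Type*} [Monoid M] (r : M → M → Prop) : Prop :=
  (∀ x u v : M, RUnit r u → RUnit r v → r (u * x * v) x) ∧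
    (∀ x a b : M, r x (a * x * b))

/-- `(M, r)` is locally of finite type (loft). -/
def IsLoft {M : Type*} [Monoid M] (r : M → M → Prop) : Prop :=
  ∀ x : M, RNonUnit r x →
    ∃ A : Set M, A.Finite ∧ A ⊆ {a : M | RIrred r a} ∧
      ∀ l : List M, IsFac r x l →
        ∃ m : List M, (∀ a ∈ m, a ∈ A) ∧ WordEquiv r l m

/-- `(M, r)` is BF-factorable. -/
def IsBFFactorable {M : Type*} [Monoid M] (r : M → M → Prop) : Prop :=
  ∀ x : M, RNonUnit r x →
    {n : ℕ | ∃ l : List M, IsFac r x l ∧ l.length = n}.Finite ∧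
      {n : ℕ | ∃ l : List M, IsFac r x l ∧ l.length = n}.Nonempty

/-- `(M, r)` is BmF-factorable. -/
def IsBmFFactorable {M : Type*} [Monoid M] (r : M → M → Prop) : Prop :=
  ∀ x : M, RNonUnit r x →
    {n : ℕ | ∃ l : List M, IsMinFac r x l ∧ l.length = n}.Finite ∧
      {n : ℕ | ∃ l : List M, IsMinFac r x l ∧ l.length = n}.Nonempty

/-- `(M, r)` is FF-factorable: modulo `⊑`-equivalence, every `≼`-non-unit has finitely
many (and at least one) `≼`-factorizations. -/
def IsFFFactorable {M : Type*} [Monoid M] (r : M → M → Prop) : Prop :=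
  ∀ x : M, RNonUnit r x →
    (∃ l : List M, IsFac r x l) ∧
      ∃ F : Set (List M), F.Finite ∧
        ∀ l : List M, IsFac r x l → ∃ m ∈ F, IsFac r x m ∧ WordEquiv r l m

/-- `(M, r)` is FmF-factorable. -/
def IsFmFFactorable {M : Type*} [Monoid M] (r : M → M → Prop) : Prop :=
  ∀ x : M, RNonUnit r x →
    (∃ l : List M, IsMinFac r x l) ∧
      ∃ F : Set (List M), F.Finite ∧
        ∀ l : List M, IsMinFac r x l → ∃ m ∈ F, IsMinFac r x m ∧ WordEquiv r l m

/-- `(M, r)` is FF-atomic. -/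
def IsFFAtomic {M : Type*} [Monoid M] (r : M → M → Prop) : Prop :=
  ∀ x : M, RNonUnit r x →
    (∃ l : List M, IsAtomicFac r x l) ∧
      ∃ F : Set (List M), F.Finite ∧
        ∀ l : List M, IsAtomicFac r x l → ∃ m ∈ F, IsAtomicFac r x m ∧ WordEquiv r l m

/-- `(M, r)` is FmF-atomic. -/
def IsFmFAtomic {M : Type*} [Monoid M] (r : M → M → Prop) : Prop :=
  ∀ x : M, RNonUnit r x →
    (∃ l : List M, IsMinAtomicFac r x l) ∧
      ∃ F : Set (List M), F.Finite ∧
        ∀ l : List M, IsMinAtomicFac r x l → ∃ m ∈ F, IsMinAtomicFac r x m ∧ WordEquiv r l m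


section AuxStmt8

variable {H : Type*} [Monoid H] {r : H → H → Prop}

/-- Auxiliary: a "representation" of an element by pairs (p, a) with p = u*a*v. -/
def RepOK (r : H → H → Prop) (B : Set H) (q : List (H × H)) : Prop :=
  ∀ t ∈ q, t.2 ∈ B ∧ RNonUnit r t.2 ∧ ∃ u v : H, RUnit r u ∧ RUnit r v ∧ t.1 = u * t.2 * v

/-- Auxiliary: `x` factors into irreducibles from `𝓗^× A 𝓗^×`. -/
def Good (r : H → H → Prop) (A : Set H) (x : H) : Prop :=
  ∃ l : List H, l ≠ [] ∧
    (∀ b ∈ l, RIrred r b ∧ ∃ u a v : H, RUnit r u ∧ a ∈ A ∧ RUnit r v ∧ b = u * a * v) ∧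
    l.prod = x

lemma aux_one_le (hwp : WeaklyPositive r) (y : H) : r 1 y := by
  simpa using hwp.2 1 y 1

lemma aux_unit_one (hrefl : Reflexive r) : RUnit r (1 : H) := ⟨hrefl 1, hrefl 1⟩

lemma aux_unit_of_le_one (hwp : WeaklyPositive r) {u : H} (h : r u 1) : RUnit r u :=
  ⟨h, aux_one_le hwp u⟩

lemma aux_unit_of_le (htrans : Transitive r) (hwp : WeaklyPositive r) {x u : H}
    (hxu : r x u) (hu : RUnit r u) : RUnit r x :=
  aux_unit_of_le_one hwp (htrans hxu hu.1)

lemma aux_unit_mul (hwp : WeaklyPositive r) {u v : H} (hu : RUnit r u) (hv : RUnit r v) :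
    RUnit r (u * v) :=
  aux_unit_of_le_one hwp (by simpa using hwp.1 1 u v hu hv)

lemma aux_le_core (hwp : WeaklyPositive r) (a u v : H) : r a (u * a * v) := hwp.2 a u v

lemma aux_core_le (hwp : WeaklyPositive r) {u v : H} (hu : RUnit r u) (hv : RUnit r v)
    (a : H) : r (u * a * v) a := hwp.1 a u v hu hv

lemma aux_le_prod (hwp : WeaklyPositive r) {l : List H} {p : H} (hp : p ∈ l) :
    r p l.prod := by
  obtain ⟨s, t, rfl⟩ := List.append_of_mem hp
  have h := hwp.2 p s.prod t.prod
  simpa [List.prod_append, List.prod_cons, mul_assoc] using h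

lemma aux_irred_core (hrefl : Reflexive r) (htrans : Transitive r) (hwp : WeaklyPositive r)
    {u a v : H} (hu : RUnit r u) (hv : RUnit r v) (hx : RIrred r (u * a * v)) :
    RIrred r a := by
  have hxa : r (u * a * v) a := aux_core_le hwp hu hv a
  have hax : r a (u * a * v) := aux_le_core hwp a u v
  have hanu : RNonUnit r a := fun ha => hx.1 (aux_unit_of_le htrans hwp hxa ha)
  refine ⟨hanu, ?_⟩
  intro y z hy hz hya hza heq
  have huy_le_y : r (u * y) y := by simpa using hwp.1 y u 1 hu (aux_unit_one hrefl)
  have hy_le_uy : r y (u * y) := by simpa using hwp.2 y u 1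
  have hzv_le_z : r (z * v) z := by simpa using hwp.1 z 1 v (aux_unit_one hrefl) hv
  have hz_le_zv : r z (z * v) := by simpa using hwp.2 z 1 v
  have huynu : RNonUnit r (u * y) := fun h => hy (aux_unit_of_le htrans hwp hy_le_uy h)
  have hzvnu : RNonUnit r (z * v) := fun h => hz (aux_unit_of_le htrans hwp hz_le_zv h)
  refine hx.2 (u * y) (z * v) huynu hzvnu ⟨?_, ?_⟩ ⟨?_, ?_⟩ ?_
  · exact htrans huy_le_y (htrans hya.1 hax)
  · intro h; exact hya.2 (htrans hax (htrans h huy_le_y))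
  · exact htrans hzv_le_z (htrans hza.1 hax)
  · intro h; exact hza.2 (htrans hax (htrans h hzv_le_z))
  · rw [heq]; simp [mul_assoc]

lemma aux_good_mul {A : Set H} {y z : H} (hy : Good r A y) (hz : Good r A z) :
    Good r A (y * z) := by
  obtain ⟨l₁, h₁, hl₁, hp₁⟩ := hy
  obtain ⟨l₂, h₂, hl₂, hp₂⟩ := hz
  exact ⟨l₁ ++ l₂, by simp [h₁], fun b hb => (List.mem_append.mp hb).elim (hl₁ b) (hl₂ b),
    by simp [List.prod_append, hp₁, hp₂]⟩

lemma aux_normalize (hrefl : Reflexive r) (htrans : Transitive r) (hwp : WeaklyPositive r)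
    {B : Set H} :
    ∀ (n : ℕ) (q : List (H × H)) (x : H), q.length ≤ n →
      (∀ t ∈ q, t.2 ∈ B ∧ ∃ u v : H, RUnit r u ∧ RUnit r v ∧ t.1 = u * t.2 * v) →
      (q.map Prod.fst).prod = x → RNonUnit r x →
      ∃ q' : List (H × H), q' ≠ [] ∧ RepOK r B q' ∧ (q'.map Prod.fst).prod = x := by
  intro n
  induction n with
  | zero =>
    intro q x hlen _ hprod hxnu
    have hq : q = [] := List.length_eq_zero_iff.mp (Nat.le_zero.mp hlen)
    subst hq
    simp only [List.map_nil, List.prod_nil] at hprod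
    exact absurd (by rw [← hprod]; exact aux_unit_one hrefl) hxnu
  | succ n ih =>
    intro q x hlen hq hprod hxnu
    rcases q with _ | ⟨t, q₂⟩
    · simp only [List.map_nil, List.prod_nil] at hprod
      exact absurd (by rw [← hprod]; exact aux_unit_one hrefl) hxnu
    by_cases ht1 : RUnit r t.1
    · rcases q₂ with _ | ⟨t₂, q₃⟩
      · simp only [List.map_cons, List.map_nil, List.prod_cons, List.prod_nil,
          mul_one] at hprod
        exact absurd (by rw [← hprod]; exact ht1) hxnu
      · obtain ⟨hmem₂, u₂, v₂, hu₂, hv₂, he₂⟩ := hq t₂ (by simp)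
        apply ih ((t.1 * t₂.1, t₂.2) :: q₃) x ?_ ?_ ?_ hxnu
        · simp only [List.length_cons] at hlen ⊢; omega
        · intro t' ht'
          rcases List.mem_cons.mp ht' with rfl | h'
          · exact ⟨hmem₂, t.1 * u₂, v₂, aux_unit_mul hwp ht1 hu₂, hv₂,
              by rw [he₂]; simp [mul_assoc]⟩
          · exact hq t' (by simp [h'])
        · simp only [List.map_cons, List.prod_cons, mul_assoc] at hprod ⊢
          exact hprod
    · obtain ⟨htB, u₁, v₁, hu₁, hv₁, he₁⟩ := hq t (by simp)
      have ht2nu : RNonUnit r t.2 := fun h2 =>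
        ht1 (aux_unit_of_le htrans hwp
          (by rw [he₁]; exact aux_core_le hwp hu₁ hv₁ t.2) h2)
      by_cases hz : RUnit r ((q₂.map Prod.fst).prod)
      · refine ⟨[(t.1 * (q₂.map Prod.fst).prod, t.2)], by simp, ?_, ?_⟩
        · intro t' ht'
          simp only [List.mem_singleton] at ht'
          subst ht'
          exact ⟨htB, ht2nu, u₁, v₁ * (q₂.map Prod.fst).prod, hu₁,
            aux_unit_mul hwp hv₁ hz, by rw [he₁]; simp [mul_assoc]⟩
        · simp only [List.map_cons, List.map_nil, List.prod_cons, List.prod_nil, mul_one]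
          simp only [List.map_cons, List.prod_cons] at hprod
          exact hprod
      · obtain ⟨q₂', hne', hrep', hprod'⟩ := ih q₂ ((q₂.map Prod.fst).prod)
          (by simp only [List.length_cons] at hlen; omega)
          (fun t' ht' => hq t' (by simp [ht'])) rfl hz
        refine ⟨t :: q₂', by simp, ?_, ?_⟩
        · intro t' ht'
          rcases List.mem_cons.mp ht' with rfl | h'
          · exact ⟨htB, ht2nu, u₁, v₁, hu₁, hv₁, he₁⟩
          · exact hrep' t' h'
        · simp only [List.map_cons, List.prod_cons, hprod']
          simp only [List.map_cons, List.prod_cons] at hprod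
          exact hprod

lemma aux_rep_all (hrefl : Reflexive r) (htrans : Transitive r) (hwp : WeaklyPositive r)
    {A₀ : Set H}
    (hgen : Submonoid.closure
      {w : H | ∃ u a v : H, RUnit r u ∧ a ∈ A₀ ∧ RUnit r v ∧ w = u * a * v} = ⊤) :
    ∀ y : H, RNonUnit r y →
      ∃ q : List (H × H), q ≠ [] ∧ RepOK r A₀ q ∧ (q.map Prod.fst).prod = y := by
  have raw : ∀ l : List H,
      (∀ w ∈ l, w ∈ {w : H | ∃ u a v : H, RUnit r u ∧ a ∈ A₀ ∧ RUnit r v ∧ w = u * a * v}) →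
      ∃ q : List (H × H),
        (∀ t ∈ q, t.2 ∈ A₀ ∧ ∃ u v : H, RUnit r u ∧ RUnit r v ∧ t.1 = u * t.2 * v) ∧
        (q.map Prod.fst).prod = l.prod := by
    intro l
    induction l with
    | nil => exact fun _ => ⟨[], by simp, by simp⟩
    | cons w l ihl =>
      intro hl
      obtain ⟨q', hq', hq'p⟩ := ihl (fun w' hw' => hl w' (by simp [hw']))
      obtain ⟨u, a, v, hu, ha, hv, hw⟩ := hl w (by simp)
      refine ⟨(w, a) :: q', ?_, by simp [hq'p]⟩
      intro t' ht'
      rcases List.mem_cons.mp ht' with rfl | h'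
      · exact ⟨ha, u, v, hu, hv, hw⟩
      · exact hq' t' h'
  intro y hynu
  have hy : y ∈ Submonoid.closure
      {w : H | ∃ u a v : H, RUnit r u ∧ a ∈ A₀ ∧ RUnit r v ∧ w = u * a * v} := by
    rw [hgen]; trivial
  obtain ⟨l, hl, hlprod⟩ := Submonoid.exists_list_of_mem_closure hy
  obtain ⟨q, hq, hqp⟩ := raw l hl
  exact aux_normalize hrefl htrans hwp q.length q y le_rfl hq (by rw [hqp, hlprod]) hynu

lemma aux_main (hrefl : Reflexive r) (htrans : Transitive r) (hwp : WeaklyPositive r)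
    {A₀ : Set H} (hA₀fin : A₀.Finite)
    (hrepall : ∀ y : H, RNonUnit r y →
      ∃ q : List (H × H), q ≠ [] ∧ RepOK r A₀ q ∧ (q.map Prod.fst).prod = y) :
    ∀ (k : ℕ) (B : Set H), B ⊆ A₀ →
      (∀ b ∈ A₀, ∀ a ∈ B, RLt r b a → b ∈ B) → B.ncard ≤ k →
      ∀ (q : List (H × H)) (x : H), RepOK r B q → (q.map Prod.fst).prod = x →
        RNonUnit r x → Good r {a : H | a ∈ A₀ ∧ RIrred r a} x := by
  intro k
  induction k using Nat.strong_induction_on with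
  | _ k ihk =>
  intro B hBsub hBdc hBcard
  suffices inner : ∀ (m : ℕ) (q : List (H × H)) (x : H), q.length ≤ m → RepOK r B q →
      (q.map Prod.fst).prod = x → RNonUnit r x →
      Good r {a : H | a ∈ A₀ ∧ RIrred r a} x by
    intro q x h1 h2 h3
    exact inner q.length q x le_rfl h1 h2 h3
  intro m
  induction m with
  | zero =>
    intro q x hlen _ hprod hxnu
    have hq : q = [] := List.length_eq_zero_iff.mp (Nat.le_zero.mp hlen)
    subst hq
    simp only [List.map_nil, List.prod_nil] at hprod
    exact absurd (by rw [← hprod]; exact aux_unit_one hrefl) hxnu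
  | succ m ihm =>
    intro q x hlen hrep hprod hxnu
    rcases q with _ | ⟨t, q₂⟩
    · simp only [List.map_nil, List.prod_nil] at hprod
      exact absurd (by rw [← hprod]; exact aux_unit_one hrefl) hxnu
    rcases q₂ with _ | ⟨t₂, q₃⟩
    · -- singleton case
      obtain ⟨haB, hanu, u, v, hu, hv, he⟩ := hrep t (by simp)
      simp only [List.map_cons, List.map_nil, List.prod_cons, List.prod_nil,
        mul_one] at hprod
      subst hprod
      have hxa : r t.1 t.2 := by rw [he]; exact aux_core_le hwp hu hv t.2
      by_cases hxi : RIrred r t.1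
      · refine ⟨[t.1], by simp, ?_, by simp⟩
        intro b hb
        simp only [List.mem_singleton] at hb
        subst hb
        refine ⟨hxi, u, t.2, v, hu, ⟨hBsub haB, ?_⟩, hv, he⟩
        exact aux_irred_core hrefl htrans hwp hu hv (by rw [← he]; exact hxi)
      · unfold RIrred at hxi
        push_neg at hxi
        obtain ⟨y, z, hynu, hznu, hylt, hzlt, hxyz⟩ := hxi hxnu
        have hCdc : ∀ b ∈ A₀, ∀ a ∈ {b : H | b ∈ B ∧ RLt r b t.2},
            RLt r b a → b ∈ {b : H | b ∈ B ∧ RLt r b t.2} := by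
          intro b hbA a ha hba
          exact ⟨hBdc b hbA a ha.1 hba,
            htrans hba.1 ha.2.1, fun h => ha.2.2 (htrans h hba.1)⟩
        have hCsub : {b : H | b ∈ B ∧ RLt r b t.2} ⊆ B := fun b hb => hb.1
        have haC : t.2 ∉ {b : H | b ∈ B ∧ RLt r b t.2} := fun h => h.2.2 h.2.1
        have hcard : ({b : H | b ∈ B ∧ RLt r b t.2}).ncard < k :=
          lt_of_lt_of_le
            (Set.ncard_lt_ncard ⟨hCsub, fun h => haC (h haB)⟩ (hA₀fin.subset hBsub)) hBcard
        have strengthen : ∀ w : H, RNonUnit r w → RLt r w t.1 →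
            ∃ qw : List (H × H), RepOK r {b : H | b ∈ B ∧ RLt r b t.2} qw ∧
              (qw.map Prod.fst).prod = w := by
          intro w hwnu hwlt
          obtain ⟨qw, hwne, hwrep, hwprod⟩ := hrepall w hwnu
          refine ⟨qw, ?_, hwprod⟩
          intro t' ht'
          obtain ⟨ht'A, ht'nu, u', v', hu', hv', he'⟩ := hwrep t' ht'
          have h1 : r t'.1 w := by
            rw [← hwprod]
            exact aux_le_prod hwp (List.mem_map_of_mem (f := Prod.fst) ht')
          have h2 : r t'.2 w := htrans (by rw [he']; exact aux_le_core hwp t'.2 u' v') h1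
          have h3 : r t'.2 t.2 := htrans h2 (htrans hwlt.1 hxa)
          have h4 : ¬ r t.2 t'.2 := fun h => hwlt.2 (htrans hxa (htrans h h2))
          exact ⟨⟨hBdc t'.2 ht'A t.2 haB ⟨h3, h4⟩, h3, h4⟩, ht'nu, u', v', hu', hv', he'⟩
        obtain ⟨qy, hqyrep, hqyprod⟩ := strengthen y hynu hylt
        obtain ⟨qz, hqzrep, hqzprod⟩ := strengthen z hznu hzlt
        have gy := ihk _ hcard _ (fun b hb => hBsub hb.1) hCdc le_rfl qy y hqyrep hqyprod hynu
        have gz := ihk _ hcard _ (fun b hb => hBsub hb.1) hCdc le_rfl qz z hqzrep hqzprod hznu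
        rw [hxyz]
        exact aux_good_mul gy gz
    · -- length ≥ 2 : split head / tail
      obtain ⟨h1B, h1nu, u₁, v₁, hu₁, hv₁, he₁⟩ := hrep t (by simp)
      have ht21 : r t.2 t.1 := by rw [he₁]; exact aux_le_core hwp t.2 u₁ v₁
      have ht1nu : RNonUnit r t.1 := fun h => h1nu (aux_unit_of_le htrans hwp ht21 h)
      obtain ⟨h2B, h2nu, u₂, v₂, hu₂, hv₂, he₂⟩ := hrep t₂ (by simp)
      have ht22 : r t₂.2 t₂.1 := by rw [he₂]; exact aux_le_core hwp t₂.2 u₂ v₂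
      have ht2nu : RNonUnit r t₂.1 := fun h => h2nu (aux_unit_of_le htrans hwp ht22 h)
      have hzle : r t₂.1 (((t₂ :: q₃).map Prod.fst).prod) :=
        aux_le_prod hwp (by simp : t₂.1 ∈ (t₂ :: q₃).map Prod.fst)
      have hznu : RNonUnit r (((t₂ :: q₃).map Prod.fst).prod) :=
        fun h => ht2nu (aux_unit_of_le htrans hwp hzle h)
      have hlen' : (t₂ :: q₃).length ≤ m := by
        simp only [List.length_cons] at hlen ⊢; omega
      have gy := ihm [t] t.1 (by simp only [List.length_cons, List.length_nil] at hlen ⊢; omega)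
        (fun t' ht' => by
          simp only [List.mem_singleton] at ht'
          subst ht'
          exact hrep t' (by simp))
        (by simp) ht1nu
      have gz := ihm (t₂ :: q₃) (((t₂ :: q₃).map Prod.fst).prod) hlen'
        (fun t' ht' => hrep t' (by simp [ht'])) rfl hznu
      have hxeq : x = t.1 * ((t₂ :: q₃).map Prod.fst).prod := by
        rw [← hprod]; simp [mul_assoc]
      rw [hxeq]
      exact aux_good_mul gy gz

end AuxStmt8

/-- Theorem 4.7. Let `(H, ≼)` be an f.g.u. weakly positive monoid.
Then there is a finite set `A` of `≼`-irreducibles such that every `≼`-non-unit is a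
non-empty product of elements of `𝓘(𝓗) ∩ 𝓗^× A 𝓗^×`. In particular, `(H, ≼)` is
factorable. -/
theorem stmt8 {H : Type*} [Monoid H] (r : H → H → Prop)
    (hrefl : Reflexive r) (htrans : Transitive r)
    (hwp : WeaklyPositive r) (hfgu : IsFGU r) :
    (∃ A : Set H, A.Finite ∧ (∀ a ∈ A, RIrred r a) ∧
      ∀ x : H, RNonUnit r x →
        ∃ l : List H, l ≠ [] ∧
          (∀ b ∈ l, RIrred r b ∧
            ∃ u a v : H, RUnit r u ∧ a ∈ A ∧ RUnit r v ∧ b = u * a * v) ∧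
          l.prod = x) ∧
    Factorable r := by
  classical
  obtain ⟨A₀, hA₀fin, hgen⟩ := hfgu
  have hrepall := aux_rep_all hrefl htrans hwp hgen
  have key : ∀ x : H, RNonUnit r x → Good r {a : H | a ∈ A₀ ∧ RIrred r a} x := by
    intro x hx
    obtain ⟨q, hqne, hqrep, hqprod⟩ := hrepall x hx
    exact aux_main hrefl htrans hwp hA₀fin hrepall A₀.ncard A₀ subset_rfl
      (fun b hb _ _ _ => hb) le_rfl q x hqrep hqprod hx
  constructor
  · refine ⟨{a : H | a ∈ A₀ ∧ RIrred r a}, hA₀fin.subset (fun a ha => ha.1),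
      fun a ha => ha.2, fun x hx => key x hx⟩
  · intro x hx
    obtain ⟨l, hne, hl, hprod⟩ := key x hx
    exact ⟨l, hne, fun a ha => (hl a ha).1, hprod⟩

end FactPaper
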